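/- arXiv:2502.19904 — 4 statements merged into one kernel-verified Lean document; each statement's English description precedes it below -/
import Mathlib

section
/- Let E and F be complex Hilbert spaces and let d be a densely defined closed linear operator from E to F whose adjoint d† is densely defined. On the Hilbert space H = E ×₂ F (the product equipped with the ℓ²-inner product ⟨(f,F),(g,G)⟩ = ⟨f,g⟩ + ⟨F,G⟩), define the operator D with domain (dom d) × (dom d†) by D(f, F) = (d† F, d f). Then D is self-adjoint: the adjoint of D (as a densely defined operator on H) equals D, i.e. they have the same domain and the same action. -/
open scoped InnerProductSpace

namespace DiracSAux

variable {E F : Type*} [NormedAddCommGroup E] [InnerProductSpace ℂ E] [CompleteSpace E]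
  [NormedAddCommGroup F] [InnerProductSpace ℂ F] [CompleteSpace F]

lemma mem_graph_of_inner (d : E →ₗ.[ℂ] F) (hdense : Dense (d.domain : Set E))
    (hclosed : d.IsClosed) {g : E} {v : F}
    (h : ∀ y : d.adjoint.domain, ⟪v, (y : F)⟫_ℂ = ⟪g, d.adjoint y⟫_ℂ) :
    (g, v) ∈ d.graph := by
  set e := WithLp.prodContinuousLinearEquiv 2 ℂ E F with he
  set G : Submodule ℂ (WithLp 2 (E × F)) :=
    d.graph.comap (e : WithLp 2 (E × F) →ₗ[ℂ] E × F) with hG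
  have hGclosed : IsClosed (G : Set (WithLp 2 (E × F))) :=
    hclosed.preimage e.continuous
  haveI : CompleteSpace G := hGclosed.completeSpace_coe
  have hz : e.symm (g, v) ∈ Gᗮᗮ := by
    rw [Submodule.mem_orthogonal]
    intro w hw
    -- w.snd is in the adjoint domain with value -w.fst
    have hw2 : ∀ x : d.domain, ⟪-w.fst, (x : E)⟫_ℂ = ⟪w.snd, d x⟫_ℂ := by
      intro x
      have hx : e.symm ((x : E), d x) ∈ G := by
        simp only [hG, Submodule.mem_comap, ContinuousLinearEquiv.coe_coe,
          ContinuousLinearEquiv.apply_symm_apply]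
        exact d.mem_graph x
      have h0 := (Submodule.mem_orthogonal G w).mp hw _ hx
      rw [WithLp.prod_inner_apply] at h0
      have h1 : ⟪(x : E), w.fst⟫_ℂ + ⟪d x, w.snd⟫_ℂ = 0 := by
        exact h0
      have := congrArg (starRingEnd ℂ) h1
      simp only [map_add, inner_conj_symm, map_zero] at this
      rw [inner_neg_left]
      linear_combination -this
    have hmem : w.snd ∈ d.adjoint.domain :=
      d.mem_adjoint_domain_of_exists w.snd ⟨-w.fst, hw2⟩
    have hval : d.adjoint ⟨w.snd, hmem⟩ = -w.fst :=
      LinearPMap.adjoint_apply_eq hdense ⟨w.snd, hmem⟩ hw2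
    have h3 := h ⟨w.snd, hmem⟩
    rw [hval] at h3
    rw [WithLp.prod_inner_apply]
    have h4 := congrArg (starRingEnd ℂ) h3
    simp only [inner_conj_symm, inner_neg_right, map_neg] at h4
    have hfst : (e.symm (g, v)).fst = g := rfl
    have hsnd : (e.symm (g, v)).snd = v := rfl
    simp only [WithLp.ofLp_fst, WithLp.ofLp_snd]
    rw [hfst, hsnd]
    linear_combination h4
  rw [Submodule.orthogonal_orthogonal] at hz
  simp only [hG, Submodule.mem_comap] at hz
  exact hz

end DiracSAux

open scoped InnerProductSpace

/-- The abstract first-order (Dirac-type) operator `D (f, F) = (d† F, d f)` associated with a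
densely defined closed operator `d` (abstract exterior derivative) with densely defined adjoint
is self-adjoint on `E ×₂ F`. -/
theorem dirac_operator_isSelfAdjoint
    {E F : Type*} [NormedAddCommGroup E] [InnerProductSpace ℂ E] [CompleteSpace E]
    [NormedAddCommGroup F] [InnerProductSpace ℂ F] [CompleteSpace F]
    (d : E →ₗ.[ℂ] F)
    (hdense : Dense (d.domain : Set E))
    (hclosed : d.IsClosed)
    (hadj_dense : Dense ((d.adjoint).domain : Set F))
    (D : WithLp 2 (E × F) →ₗ.[ℂ] WithLp 2 (E × F))
    (hdom : ∀ x : WithLp 2 (E × F),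
      x ∈ D.domain ↔ x.fst ∈ d.domain ∧ x.snd ∈ d.adjoint.domain)
    (hact : ∀ (x : WithLp 2 (E × F)) (hx : x ∈ D.domain),
      (D ⟨x, hx⟩).fst = d.adjoint ⟨x.snd, ((hdom x).mp hx).2⟩ ∧
      (D ⟨x, hx⟩).snd = d ⟨x.fst, ((hdom x).mp hx).1⟩) :
    D.adjoint = D := by
  have hfa : d.adjoint.IsFormalAdjoint d := d.adjoint_isFormalAdjoint hdense
  set e := WithLp.prodContinuousLinearEquiv 2 ℂ E F with he
  -- the domain of D is dense
  have hDdense : Dense (D.domain : Set (WithLp 2 (E × F))) := by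
    have h1 : Dense ((d.domain : Set E) ×ˢ (d.adjoint.domain : Set F)) :=
      hdense.prod hadj_dense
    have h2 : (D.domain : Set (WithLp 2 (E × F))) =
        e ⁻¹' ((d.domain : Set E) ×ˢ (d.adjoint.domain : Set F)) := by
      ext x
      simp only [Set.mem_preimage, Set.mem_prod, SetLike.mem_coe]
      exact hdom x
    rw [h2]
    exact h1.preimage e.toHomeomorph.isOpenMap
  -- D is symmetric
  have hsym : D.IsFormalAdjoint D := by
    rintro ⟨x, hx⟩ ⟨y, hy⟩
    rw [WithLp.prod_inner_apply, WithLp.prod_inner_apply]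
    simp only [WithLp.ofLp_fst, WithLp.ofLp_snd]
    rw [(hact x hx).1, (hact x hx).2, (hact y hy).1, (hact y hy).2]
    rw [hfa ⟨x.snd, ((hdom x).mp hx).2⟩ ⟨y.fst, ((hdom y).mp hy).1⟩]
    have h2 := hfa ⟨y.snd, ((hdom y).mp hy).2⟩ ⟨x.fst, ((hdom x).mp hx).1⟩
    have h3 := congrArg (starRingEnd ℂ) h2
    simp only [inner_conj_symm] at h3
    rw [← h3]
    ring
  have hle : D ≤ D.adjoint := LinearPMap.IsFormalAdjoint.le_adjoint hDdense hsym
  -- the reverse inclusion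
  have hfund : D.adjoint.IsFormalAdjoint D := D.adjoint_isFormalAdjoint hDdense
  have main : ∀ y : D.adjoint.domain, ∃ hy : (y : WithLp 2 (E × F)) ∈ D.domain,
      D ⟨(y : WithLp 2 (E × F)), hy⟩ = D.adjoint y := by
    intro y
    -- the second component of y is in the domain of the adjoint
    have part1 : ∀ x₁ : d.domain,
        ⟪(D.adjoint y).fst, (x₁ : E)⟫_ℂ = ⟪(y : WithLp 2 (E × F)).snd, d x₁⟫_ℂ := by
      intro x₁
      set xel : WithLp 2 (E × F) := (WithLp.equiv 2 (E × F)).symm ((x₁ : E), 0) with hxel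
      have hxmem : xel ∈ D.domain := (hdom xel).mpr ⟨x₁.2, (d.adjoint.domain).zero_mem⟩
      have h0 := hfund y ⟨xel, hxmem⟩
      rw [WithLp.prod_inner_apply, WithLp.prod_inner_apply] at h0
      simp only [WithLp.ofLp_fst, WithLp.ofLp_snd] at h0
      have e1 : (D ⟨xel, hxmem⟩).fst = 0 := by
        rw [(hact xel hxmem).1]
        have h5 : (⟨xel.snd, ((hdom xel).mp hxmem).2⟩ : d.adjoint.domain) = 0 :=
          Subtype.ext rfl
        rw [h5, d.adjoint.map_zero]
      have e2 : (D ⟨xel, hxmem⟩).snd = d x₁ := by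
        rw [(hact xel hxmem).2]
        congr 1
      rw [e1, e2] at h0
      have h6 : xel.snd = (0 : F) := rfl
      have h7 : xel.fst = (x₁ : E) := rfl
      rw [h6, h7] at h0
      simpa using h0
    have hsndmem : (y : WithLp 2 (E × F)).snd ∈ d.adjoint.domain :=
      d.mem_adjoint_domain_of_exists _ ⟨(D.adjoint y).fst, part1⟩
    have hsndval : d.adjoint ⟨(y : WithLp 2 (E × F)).snd, hsndmem⟩ = (D.adjoint y).fst :=
      LinearPMap.adjoint_apply_eq hdense _ part1
    -- the first component of y is in the domain of d
    have part2 : ∀ x₂ : d.adjoint.domain,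
        ⟪(D.adjoint y).snd, (x₂ : F)⟫_ℂ = ⟪(y : WithLp 2 (E × F)).fst, d.adjoint x₂⟫_ℂ := by
      intro x₂
      set xel : WithLp 2 (E × F) := (WithLp.equiv 2 (E × F)).symm (0, (x₂ : F)) with hxel
      have hxmem : xel ∈ D.domain := (hdom xel).mpr ⟨d.domain.zero_mem, x₂.2⟩
      have h0 := hfund y ⟨xel, hxmem⟩
      rw [WithLp.prod_inner_apply, WithLp.prod_inner_apply] at h0
      simp only [WithLp.ofLp_fst, WithLp.ofLp_snd] at h0
      have e1 : (D ⟨xel, hxmem⟩).fst = d.adjoint x₂ := by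
        rw [(hact xel hxmem).1]
        congr 1
      have e2 : (D ⟨xel, hxmem⟩).snd = 0 := by
        rw [(hact xel hxmem).2]
        have h5 : (⟨xel.fst, ((hdom xel).mp hxmem).1⟩ : d.domain) = 0 := Subtype.ext rfl
        rw [h5, d.map_zero]
      rw [e1, e2] at h0
      have h6 : xel.fst = (0 : E) := rfl
      have h7 : xel.snd = (x₂ : F) := rfl
      rw [h6, h7] at h0
      simpa using h0
    have hgraph := DiracSAux.mem_graph_of_inner d hdense hclosed part2
    rw [LinearPMap.mem_graph_iff] at hgraph
    obtain ⟨a, ha1, ha2⟩ := hgraph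
    have hfstmem : (y : WithLp 2 (E × F)).fst ∈ d.domain := (show (a : E) = (y : WithLp 2 (E × F)).fst from ha1) ▸ a.2
    have hy : (y : WithLp 2 (E × F)) ∈ D.domain := (hdom _).mpr ⟨hfstmem, hsndmem⟩
    refine ⟨hy, ?_⟩
    have hcomp1 : (D ⟨(y : WithLp 2 (E × F)), hy⟩).fst = (D.adjoint y).fst := by
      rw [(hact _ hy).1]
      exact hsndval
    have hcomp2 : (D ⟨(y : WithLp 2 (E × F)), hy⟩).snd = (D.adjoint y).snd := by
      rw [(hact _ hy).2, ← (show d a = (D.adjoint y).snd from ha2)]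
      congr 1
      exact Subtype.ext ha1.symm
    exact WithLp.ofLp_injective 2 (Prod.ext hcomp1 hcomp2)
  have hge : D.adjoint ≤ D := by
    refine ⟨fun z hz => (main ⟨z, hz⟩).choose, fun a b hab => ?_⟩
    obtain ⟨hmem, hval⟩ := main a
    rw [← hval]
    congr 1
    exact Subtype.ext hab
  exact le_antisymm hge hle
end

section
/- (Transfer of scalar L² estimates to vector-valued functions via Kato's inequality.) Let E be a finite-dimensional real inner product space, m ≥ 1, and let X₁ ⊆ X₂ ⊆ ℝᵐ be Lebesgue-measurable sets. Let C, C' ≥ 0 and suppose that every Lipschitz function u : ℝᵐ → ℝ satisfies ∫_{X₁} |u(x)|² dx ≤ C' ∫_{X₂} ‖fderiv u x‖² dx + C ∫_{X₂} |u(x)|² dx. Then every Lipschitz function ω : ℝᵐ → E satisfies ∫_{X₁} ‖ω(x)‖² dx ≤ C' ∫_{X₂} ‖fderiv ω x‖² dx + C ∫_{X₂} ‖ω(x)‖² dx, where ‖fderiv ω x‖ is the operator norm of the Fréchet derivative. -/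
open MeasureTheory

open Filter Topology

theorem kato_pointwise {X E : Type*} [NormedAddCommGroup X] [NormedSpace ℝ X]
    [NormedAddCommGroup E] [NormedSpace ℝ E]
    {ω : X → E} {x : X}
    (hu : DifferentiableAt ℝ (fun y => ‖ω y‖) x) (hω : DifferentiableAt ℝ ω x) :
    ‖fderiv ℝ (fun y => ‖ω y‖) x‖ ≤ ‖fderiv ℝ ω x‖ := by
  apply ContinuousLinearMap.opNorm_le_bound _ (norm_nonneg _)
  intro v
  have hline : HasDerivAt (fun t : ℝ => x + t • v) v 0 := by
    simpa using ((hasDerivAt_id (0:ℝ)).smul_const v).const_add x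
  have hφ : HasDerivAt (fun t : ℝ => ‖ω (x + t • v)‖) (fderiv ℝ (fun y => ‖ω y‖) x v) 0 := by
    have h0 : x + (0:ℝ) • v = x := by simp
    have := HasFDerivAt.comp_hasDerivAt (0:ℝ) (h0 ▸ hu.hasFDerivAt) hline
    simpa [Function.comp_def] using this
  have hψ : HasDerivAt (fun t : ℝ => ω (x + t • v)) (fderiv ℝ ω x v) 0 := by
    have h0 : x + (0:ℝ) • v = x := by simp
    have := HasFDerivAt.comp_hasDerivAt (0:ℝ) (h0 ▸ hω.hasFDerivAt) hline
    simpa [Function.comp_def] using this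
  rw [hasDerivAt_iff_tendsto_slope] at hφ hψ
  have key : |fderiv ℝ (fun y => ‖ω y‖) x v| ≤ ‖fderiv ℝ ω x v‖ := by
    refine le_of_tendsto_of_tendsto' (hφ.abs) (hψ.norm) ?_
    intro t
    simp only [slope, vsub_eq_sub, smul_eq_mul, abs_mul, norm_smul, Real.norm_eq_abs]
    gcongr
    simpa using abs_norm_sub_norm_le (ω (x + t • v)) (ω x)
  calc |fderiv ℝ (fun y => ‖ω y‖) x v| ≤ ‖fderiv ℝ ω x v‖ := key
    _ ≤ ‖fderiv ℝ ω x‖ * ‖v‖ := (fderiv ℝ ω x).le_opNorm v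

/-- Transfer of scalar L² estimates to vector-valued Lipschitz functions via Kato's
inequality: if every scalar Lipschitz function `u` satisfies
`∫_{X₁} |u|² ≤ C' ∫_{X₂} ‖fderiv u‖² + C ∫_{X₂} |u|²`, then every Lipschitz map `ω` into a
finite-dimensional real inner product space `E` satisfies the same estimate with norms. -/

theorem scalar_estimate_transfers_to_vector_valued
    {m : ℕ} (hm : 1 ≤ m)
    {E : Type*} [NormedAddCommGroup E] [InnerProductSpace ℝ E] [FiniteDimensional ℝ E]
    (X₁ X₂ : Set (EuclideanSpace ℝ (Fin m)))
    (hX₁ : MeasurableSet X₁) (hX₂ : MeasurableSet X₂) (hsub : X₁ ⊆ X₂)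
    (C C' : NNReal)
    (hscalar : ∀ (K : NNReal) (u : EuclideanSpace ℝ (Fin m) → ℝ), LipschitzWith K u →
      (∫⁻ x in X₁, (‖u x‖₊ : ENNReal) ^ 2)
        ≤ C' * (∫⁻ x in X₂, (‖fderiv ℝ u x‖₊ : ENNReal) ^ 2)
          + C * (∫⁻ x in X₂, (‖u x‖₊ : ENNReal) ^ 2)) :
    ∀ (K : NNReal) (ω : EuclideanSpace ℝ (Fin m) → E), LipschitzWith K ω →
      (∫⁻ x in X₁, (‖ω x‖₊ : ENNReal) ^ 2)
        ≤ C' * (∫⁻ x in X₂, (‖fderiv ℝ ω x‖₊ : ENNReal) ^ 2)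
          + C * (∫⁻ x in X₂, (‖ω x‖₊ : ENNReal) ^ 2) := by
  intro K ω hω
  set u : EuclideanSpace ℝ (Fin m) → ℝ := fun y => ‖ω y‖ with hu_def
  have hu : LipschitzWith K u := by have := lipschitzWith_one_norm.comp hω; rw [one_mul] at this; exact this
  have h := hscalar K u hu
  simp only [hu_def, nnnorm_norm] at h
  have hae : ∀ᵐ x : EuclideanSpace ℝ (Fin m),
      (‖fderiv ℝ u x‖₊ : ENNReal) ^ 2 ≤ (‖fderiv ℝ ω x‖₊ : ENNReal) ^ 2 := by
    filter_upwards [hu.ae_differentiableAt, hω.ae_differentiableAt] with x h1 h2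
    have := kato_pointwise (ω := ω) h1 h2
    gcongr
    exact_mod_cast this
  have hgrad : (∫⁻ x in X₂, (‖fderiv ℝ u x‖₊ : ENNReal) ^ 2)
      ≤ ∫⁻ x in X₂, (‖fderiv ℝ ω x‖₊ : ENNReal) ^ 2 :=
    lintegral_mono_ae (ae_restrict_of_ae hae)
  exact h.trans (add_le_add (mul_le_mul_right hgrad _) le_rfl)
end

section
/- (One-endpoint optimal Sobolev trace estimate.) Let ℓ > 0 and let f : ℝ → ℂ be continuous on [0, ℓ], differentiable on (0, ℓ), and such that both f and its derivative f' are square-integrable on (0, ℓ). Then |f(0)|² ≤ coth(ℓ) · ( ∫₀^ℓ |f'(s)|² ds + ∫₀^ℓ |f(s)|² ds ). -/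
open MeasureTheory

private lemma two_ab_le' {t a b : ℝ} (ht : 0 < t) : 2*(a*b) ≤ t*a^2 + b^2/t := by
  have h2 : t*(2*(a*b)) ≤ t*(t*a^2 + b^2/t) := by
    have hb : t * (b^2/t) = b^2 := by field_simp
    nlinarith [sq_nonneg (t*a - b)]
  exact le_of_mul_le_mul_left h2 ht

private lemma sq_le_of_forall' {x A B : ℝ} (hx : 0 ≤ x) (hA : 0 ≤ A) (hB : 0 < B)
    (h : ∀ t > 0, 2*x ≤ t*A + B/t) : x^2 ≤ A*B := by
  rcases eq_or_lt_of_le hx with hx0 | hx0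
  · rw [← hx0]
    simpa using mul_nonneg hA hB.le
  rcases eq_or_lt_of_le hA with hA0 | hA0
  · exfalso
    have h1 := h (B/x) (div_pos hB hx0)
    rw [← hA0, mul_zero, zero_add] at h1
    have h2 : B / (B/x) = x := by field_simp
    rw [h2] at h1
    linarith
  · have h1 := h (x/A) (div_pos hx0 hA0)
    have h2 : x/A*A = x := div_mul_cancel₀ _ hA0.ne'
    have h3 : B/(x/A) = B*A/x := div_div_eq_mul_div _ _ _
    rw [h2, h3] at h1
    have h5 : x ≤ B*A/x := by linarith
    have h4 : x * x ≤ B * A := by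
      calc x*x ≤ (B*A/x)*x := by nlinarith
        _ = B*A := div_mul_cancel₀ _ hx0.ne'
    nlinarith

/-- One-endpoint optimal Sobolev trace estimate: for `f ∈ H¹(0, ℓ)` (continuous on `[0, ℓ]`,
differentiable on `(0, ℓ)`, with `f` and `f'` square-integrable),
`|f 0|² ≤ coth ℓ · (‖f'‖²_{L²} + ‖f‖²_{L²})`. -/
theorem sobolev_trace_estimate_one_endpoint
    {ℓ : ℝ} (hℓ : 0 < ℓ) (f f' : ℝ → ℂ)
    (hcont : ContinuousOn f (Set.Icc 0 ℓ))
    (hderiv : ∀ s ∈ Set.Ioo 0 ℓ, HasDerivAt f (f' s) s)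
    (hf2 : IntegrableOn (fun s => ‖f s‖ ^ 2) (Set.Ioo 0 ℓ))
    (hf'2 : IntegrableOn (fun s => ‖f' s‖ ^ 2) (Set.Ioo 0 ℓ)) :
    ‖f 0‖ ^ 2 ≤ (Real.cosh ℓ / Real.sinh ℓ) *
      ((∫ s in Set.Ioo 0 ℓ, ‖f' s‖ ^ 2) + ∫ s in Set.Ioo 0 ℓ, ‖f s‖ ^ 2) := by
  have hsinh : 0 < Real.sinh ℓ := Real.sinh_pos_iff.mpr hℓ
  have hcosh : 0 < Real.cosh ℓ := Real.cosh_pos ℓ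
  set G : ℝ → ℝ := fun s => -Real.sinh (ℓ - s) with hGdef
  set G' : ℝ → ℝ := fun s => Real.cosh (ℓ - s) with hG'def
  -- derivatives of G and G'
  have hsub : ∀ s : ℝ, HasDerivAt (fun s : ℝ => ℓ - s) (-1) s := fun s =>
    (hasDerivAt_id s).const_sub ℓ
  have hGd : ∀ s : ℝ, HasDerivAt G (G' s) s := by
    intro s
    have h1 := ((Real.hasDerivAt_sinh (ℓ - s)).comp s (hsub s)).neg
    exact h1.congr_deriv (by simp [hG'def])
  have hG'd : ∀ s : ℝ, HasDerivAt G' (G s) s := by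
    intro s
    have h1 := (Real.hasDerivAt_cosh (ℓ - s)).comp s (hsub s)
    exact h1.congr_deriv (by simp [hGdef])
  have hGcont : Continuous G := (Real.continuous_sinh.comp (continuous_const.sub continuous_id)).neg
  have hG'cont : Continuous G' := Real.continuous_cosh.comp (continuous_const.sub continuous_id)
  -- bounds on G, G' on [0, ℓ]
  have hGbd : ∀ s ∈ Set.Icc (0:ℝ) ℓ, |G s| ≤ Real.cosh ℓ ∧ |G' s| ≤ Real.cosh ℓ := by
    intro s hs
    have h1 : |ℓ - s| ≤ |ℓ| := by
      rw [abs_of_nonneg (by linarith [hs.2] : (0:ℝ) ≤ ℓ - s), abs_of_nonneg hℓ.le]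
      linarith [hs.1]
    have h2 : Real.cosh (ℓ - s) ≤ Real.cosh ℓ := by
      rw [Real.cosh_le_cosh]; exact h1
    constructor
    · have h3 : |Real.sinh (ℓ - s)| ≤ Real.cosh (ℓ - s) := by
        nlinarith [sq_abs (Real.sinh (ℓ - s)), Real.cosh_sq' (ℓ - s),
          abs_nonneg (Real.sinh (ℓ - s)), Real.cosh_pos (ℓ - s)]
      calc |G s| = |Real.sinh (ℓ - s)| := by rw [hGdef]; exact abs_neg _
        _ ≤ Real.cosh (ℓ - s) := h3
        _ ≤ Real.cosh ℓ := h2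
    · show |Real.cosh (ℓ - s)| ≤ Real.cosh ℓ
      calc |Real.cosh (ℓ - s)| = Real.cosh (ℓ - s) := abs_of_pos (Real.cosh_pos _)
        _ ≤ Real.cosh ℓ := h2
  -- measurability / integrability of f and f' on Ioo
  have hfmeas : AEStronglyMeasurable f (volume.restrict (Set.Ioo 0 ℓ)) :=
    (hcont.mono Set.Ioo_subset_Icc_self).aestronglyMeasurable measurableSet_Ioo
  have hf'eq : f' =ᵐ[volume.restrict (Set.Ioo 0 ℓ)] deriv f := by
    filter_upwards [ae_restrict_mem measurableSet_Ioo] with s hs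
    exact ((hderiv s hs).deriv).symm
  have hf'meas : AEStronglyMeasurable f' (volume.restrict (Set.Ioo 0 ℓ)) :=
    ((measurable_deriv f).aestronglyMeasurable).congr hf'eq.symm
  have hconst : ∀ c : ℝ, IntegrableOn (fun _ : ℝ => c) (Set.Ioo 0 ℓ) := fun c =>
    integrableOn_const measure_Ioo_lt_top.ne
  have hfi : IntegrableOn f (Set.Ioo 0 ℓ) := by
    refine Integrable.mono' (((hconst 1).add hf2).div_const 2) hfmeas ?_
    filter_upwards with s
    show ‖f s‖ ≤ (1 + ‖f s‖ ^ 2) / 2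
    nlinarith [sq_nonneg (‖f s‖ - 1)]
  have hf'i : IntegrableOn f' (Set.Ioo 0 ℓ) := by
    refine Integrable.mono' (((hconst 1).add hf'2).div_const 2) hf'meas ?_
    filter_upwards with s
    show ‖f' s‖ ≤ (1 + ‖f' s‖ ^ 2) / 2
    nlinarith [sq_nonneg (‖f' s‖ - 1)]
  -- the integrand D = (f G)'
  set D : ℝ → ℂ := fun s => f' s * (G s : ℂ) + f s * (G' s : ℂ) with hDdef
  have hDmeas : AEStronglyMeasurable D (volume.restrict (Set.Ioo 0 ℓ)) := by
    apply AEStronglyMeasurable.add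
    · exact hf'meas.mul ((Complex.continuous_ofReal.comp hGcont).aestronglyMeasurable)
    · exact hfmeas.mul ((Complex.continuous_ofReal.comp hG'cont).aestronglyMeasurable)
  have hDi : IntegrableOn D (Set.Ioo 0 ℓ) := by
    refine Integrable.mono'
      (((hf'i.norm.add hfi.norm).const_mul (Real.cosh ℓ))) hDmeas ?_
    filter_upwards [ae_restrict_mem measurableSet_Ioo] with s hs
    obtain ⟨h1, h2⟩ := hGbd s (Set.Ioo_subset_Icc_self hs)
    calc ‖D s‖ ≤ ‖f' s * (G s : ℂ)‖ + ‖f s * (G' s : ℂ)‖ := norm_add_le _ _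
      _ = ‖f' s‖ * |G s| + ‖f s‖ * |G' s| := by
          simp [norm_mul, Complex.norm_real, Real.norm_eq_abs]
      _ ≤ ‖f' s‖ * Real.cosh ℓ + ‖f s‖ * Real.cosh ℓ := by
          gcongr
      _ = Real.cosh ℓ * (‖f' s‖ + ‖f s‖) := by ring
  -- FTC: ∫ D = sinh ℓ * f 0
  have hFTC : ∫ s in (0:ℝ)..ℓ, D s = (Real.sinh ℓ : ℂ) * f 0 := by
    have h := intervalIntegral.integral_eq_sub_of_hasDerivAt_of_le hℓ.le
      (f := fun s => f s * (G s : ℂ)) (f' := D)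
      (hcont.mul ((Complex.continuous_ofReal.comp hGcont).continuousOn))
      (fun s hs => (hderiv s hs).mul ((hGd s).ofReal_comp))
      (by
        rw [intervalIntegrable_iff_integrableOn_Ioo_of_le hℓ.le]
        exact hDi)
    rw [h]
    simp only [hGdef, sub_self, Real.sinh_zero, neg_zero, Complex.ofReal_zero, mul_zero,
      zero_sub, Complex.ofReal_neg]
    ring
  -- conversion interval integral ↔ Ioo set integral
  have conv : ∀ (h : ℝ → ℝ), (∫ s in (0:ℝ)..ℓ, h s) = ∫ s in Set.Ioo 0 ℓ, h s := by
    intro h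
    rw [intervalIntegral.integral_of_le hℓ.le, integral_Ioc_eq_integral_Ioo]
  -- B₀ = ∫ (G² + G'²) = sinh ℓ * cosh ℓ
  have hB0cont : Continuous (fun s => G s ^ 2 + G' s ^ 2) :=
    (hGcont.pow 2).add (hG'cont.pow 2)
  have hB0i : IntegrableOn (fun s => G s ^ 2 + G' s ^ 2) (Set.Ioo 0 ℓ) :=
    (hB0cont.integrableOn_Icc).mono_set Set.Ioo_subset_Icc_self
  have hB0 : (∫ s in Set.Ioo 0 ℓ, (G s ^ 2 + G' s ^ 2)) = Real.sinh ℓ * Real.cosh ℓ := by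
    rw [← conv]
    have h := intervalIntegral.integral_eq_sub_of_hasDerivAt_of_le hℓ.le
      (f := fun s => G s * G' s) (f' := fun s => G s ^ 2 + G' s ^ 2)
      ((hGcont.mul hG'cont).continuousOn)
      (fun s _ => by
        have := (hGd s).mul (hG'd s)
        exact this.congr_deriv (by ring))
      (by
        rw [intervalIntegrable_iff_integrableOn_Ioo_of_le hℓ.le]
        exact hB0i)
    rw [h]
    simp only [hGdef, hG'def, sub_self, Real.sinh_zero, neg_zero, zero_mul, Real.cosh_zero,
      sub_zero, neg_mul, zero_sub, neg_neg]
  -- step 1 : sinh ℓ * ‖f 0‖ ≤ ∫ ‖D‖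
  have step1 : Real.sinh ℓ * ‖f 0‖ ≤ ∫ s in Set.Ioo 0 ℓ, ‖D s‖ := by
    have h1 : Real.sinh ℓ * ‖f 0‖ = ‖∫ s in (0:ℝ)..ℓ, D s‖ := by
      rw [hFTC, norm_mul, Complex.norm_real, Real.norm_eq_abs, abs_of_pos hsinh]
    rw [h1]
    calc ‖∫ s in (0:ℝ)..ℓ, D s‖ ≤ ∫ s in (0:ℝ)..ℓ, ‖D s‖ :=
        intervalIntegral.norm_integral_le_integral_norm hℓ.le
      _ = ∫ s in Set.Ioo 0 ℓ, ‖D s‖ := conv _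
  -- step 2 : the weighted bound for every t > 0
  set A : ℝ := (∫ s in Set.Ioo 0 ℓ, ‖f' s‖ ^ 2) + ∫ s in Set.Ioo 0 ℓ, ‖f s‖ ^ 2 with hAdef
  have hAnn : 0 ≤ A := by
    have h1 : 0 ≤ ∫ s in Set.Ioo 0 ℓ, ‖f' s‖ ^ 2 :=
      integral_nonneg fun s => by positivity
    have h2 : 0 ≤ ∫ s in Set.Ioo 0 ℓ, ‖f s‖ ^ 2 :=
      integral_nonneg fun s => by positivity
    rw [hAdef]; linarith
  have step2 : ∀ t > 0, (∫ s in Set.Ioo 0 ℓ, ‖D s‖) ≤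
      (t * A + (Real.sinh ℓ * Real.cosh ℓ) / t) / 2 := by
    intro t ht
    have hbd : ∀ s ∈ Set.Ioo (0:ℝ) ℓ, ‖D s‖ ≤
        (t * (‖f' s‖ ^ 2 + ‖f s‖ ^ 2) + (G s ^ 2 + G' s ^ 2) / t) / 2 := by
      intro s hs
      have c1 : 2 * (‖f' s‖ * |G s|) ≤ t * ‖f' s‖ ^ 2 + |G s| ^ 2 / t := two_ab_le' ht
      have c2 : 2 * (‖f s‖ * |G' s|) ≤ t * ‖f s‖ ^ 2 + |G' s| ^ 2 / t := two_ab_le' ht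
      have hn : ‖D s‖ ≤ ‖f' s‖ * |G s| + ‖f s‖ * |G' s| := by
        calc ‖D s‖ ≤ ‖f' s * (G s : ℂ)‖ + ‖f s * (G' s : ℂ)‖ := norm_add_le _ _
          _ = ‖f' s‖ * |G s| + ‖f s‖ * |G' s| := by
              simp [norm_mul, Complex.norm_real, Real.norm_eq_abs]
      have e1 : |G s| ^ 2 = G s ^ 2 := sq_abs _
      have e2 : |G' s| ^ 2 = G' s ^ 2 := sq_abs _
      rw [e1] at c1; rw [e2] at c2
      have : (G s ^ 2 + G' s ^ 2) / t = G s ^ 2 / t + G' s ^ 2 / t := add_div _ _ _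
      linarith
    have hint : IntegrableOn (fun s =>
        (t * (‖f' s‖ ^ 2 + ‖f s‖ ^ 2) + (G s ^ 2 + G' s ^ 2) / t) / 2) (Set.Ioo 0 ℓ) :=
      ((((hf'2.add hf2).const_mul t).add (hB0i.div_const t)).div_const 2)
    calc (∫ s in Set.Ioo 0 ℓ, ‖D s‖)
        ≤ ∫ s in Set.Ioo 0 ℓ,
            (t * (‖f' s‖ ^ 2 + ‖f s‖ ^ 2) + (G s ^ 2 + G' s ^ 2) / t) / 2 :=
          setIntegral_mono_on hDi.norm hint measurableSet_Ioo hbd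
      _ = (t * A + (Real.sinh ℓ * Real.cosh ℓ) / t) / 2 := by
          have i1 : IntegrableOn (fun s => t * (‖f' s‖ ^ 2 + ‖f s‖ ^ 2)) (Set.Ioo 0 ℓ) :=
            (hf'2.add hf2).const_mul t
          have i2 : IntegrableOn (fun s => (G s ^ 2 + G' s ^ 2) / t) (Set.Ioo 0 ℓ) :=
            hB0i.div_const t
          rw [hAdef, ← hB0, integral_div, integral_add i1 i2, integral_const_mul,
            integral_add hf'2 hf2, integral_div]
    -- done
  have key : (Real.sinh ℓ * ‖f 0‖) ^ 2 ≤ A * (Real.sinh ℓ * Real.cosh ℓ) := by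
    apply sq_le_of_forall' (by positivity) hAnn (by positivity)
    intro t ht
    have := (step1.trans (step2 t ht))
    linarith
  have hs2 : (0:ℝ) < Real.sinh ℓ ^ 2 := by positivity
  rw [hAdef] at key ⊢
  rw [div_mul_eq_mul_div, le_div_iff₀ hsinh]
  nlinarith [key]
end

section
/- (Summed two-endpoint trace estimate on a family of edges.) Let E be a countable index set, ℓ₀ > 0, and ℓ : E → ℝ with ℓ_e ≥ ℓ₀ for all e ∈ E. For each e ∈ E let f_e : ℝ → ℂ be continuous on [0, ℓ_e], differentiable on (0, ℓ_e), and such that both f_e and its derivative f_e' are square-integrable on (0, ℓ_e). Then Σ_{e ∈ E} ( |f_e(0)|² + |f_e(ℓ_e)|² ) ≤ coth(ℓ₀/2) · Σ_{e ∈ E} ( ∫₀^{ℓ_e} |f_e'(s)|² ds + ∫₀^{ℓ_e} |f_e(s)|² ds ), where both sums are taken in [0, ∞]. -/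
open MeasureTheory

open Set


lemma aux_quad (sh ch a b r : ℝ) (hch : 0 < ch) (hsq : ch^2 = sh^2 + 1)
    (hr1 : r ≤ a*b) (hr2 : -(a*b) ≤ r) :
    (a^2 + sh*ch*(2*r)) / ch^2 ≤ b^2 + a^2 := by
  rw [div_le_iff₀ (by positivity)]
  rcases le_or_gt 0 (sh*ch) with hsc | hsc
  · have h1 : 0 ≤ a*b - r := by linarith
    nlinarith [sq_nonneg (sh*a - ch*b), mul_nonneg hsc h1, sq_nonneg a, sq_nonneg b]
  · have h1 : 0 ≤ r + a*b := by linarith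
    nlinarith [sq_nonneg (sh*a + ch*b), mul_nonneg (neg_nonneg.mpr hsc.le) h1,
      sq_nonneg a, sq_nonneg b]

lemma single_edge_trace {L : ℝ} (hL : 0 < L) (f f' : ℝ → ℂ)
    (hcont : ContinuousOn f (Set.Icc 0 L))
    (hderiv : ∀ s ∈ Set.Ioo 0 L, HasDerivAt f (f' s) s)
    (hf2 : MemLp f 2 (volume.restrict (Set.Ioo 0 L)))
    (hf'2 : MemLp f' 2 (volume.restrict (Set.Ioo 0 L))) :
    Real.sinh (L/2) / Real.cosh (L/2) * (‖f 0‖^2 + ‖f L‖^2)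
      ≤ ∫ s in Set.Ioo 0 L, (‖f' s‖^2 + ‖f s‖^2) := by
  set ρ : ℝ → ℝ := fun s => -(Real.sinh (s - L/2) / Real.cosh (s - L/2)) with hρdef
  set ρ' : ℝ → ℝ := fun s => -(1 / Real.cosh (s - L/2)^2) with hρ'def
  set K : ℝ → ℝ := fun s => ρ' s * ‖f s‖^2 + ρ s * (2 * ((starRingEnd ℂ) (f s) * f' s).re)
    with hKdef
  have hchpos : ∀ s : ℝ, 0 < Real.cosh (s - L/2) := fun s => Real.cosh_pos _
  have hρderiv : ∀ s : ℝ, HasDerivAt ρ (ρ' s) s := by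
    intro s
    have h1 : HasDerivAt (fun t : ℝ => t - L/2) 1 s := (hasDerivAt_id s).sub_const _
    have hsh : HasDerivAt (fun t : ℝ => Real.sinh (t - L/2)) (Real.cosh (s - L/2)) s := by
      simpa [Function.comp_def] using (Real.hasDerivAt_sinh (s - L/2)).comp s h1
    have hch : HasDerivAt (fun t : ℝ => Real.cosh (t - L/2)) (Real.sinh (s - L/2)) s := by
      simpa [Function.comp_def] using (Real.hasDerivAt_cosh (s - L/2)).comp s h1
    have key : Real.cosh (s - L/2) * Real.cosh (s - L/2)
        - Real.sinh (s - L/2) * Real.sinh (s - L/2) = 1 := by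
      have := Real.cosh_sq (s - L/2); nlinarith
    have := (hsh.div hch (ne_of_gt (hchpos s))).neg
    rw [key] at this
    exact this
  have hnsq : ∀ s ∈ Set.Ioo 0 L, HasDerivAt (fun t => ‖f t‖^2)
      (2 * ((starRingEnd ℂ) (f s) * f' s).re) s := by
    intro s hs
    have hd := hderiv s hs
    have hre : HasDerivAt (fun t => (f t).re) ((f' s).re) s := by
      simpa [Function.comp_def] using (Complex.reCLM.hasFDerivAt.comp_hasDerivAt s hd.hasFDerivAt)
    have him : HasDerivAt (fun t => (f t).im) ((f' s).im) s := by
      simpa [Function.comp_def] using (Complex.imCLM.hasFDerivAt.comp_hasDerivAt s hd.hasFDerivAt)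
    have hsum : HasDerivAt (fun t => (f t).re^2 + (f t).im^2)
        (2*(f s).re*(f' s).re + 2*(f s).im*(f' s).im) s := by
      have := ((hre.mul hre).add (him.mul him))
      exact (this.congr_deriv (by ring)).congr_of_eventuallyEq
        (Filter.Eventually.of_forall fun t => by
          show (f t).re^2 + (f t).im^2 = (f t).re * (f t).re + (f t).im * (f t).im; ring)
    have heq : (fun t => ‖f t‖^2) = fun t => (f t).re^2 + (f t).im^2 := by
      funext t
      rw [Complex.sq_norm, Complex.normSq_apply]; ring
    rw [heq]
    convert hsum using 1
    simp [Complex.mul_re, Complex.conj_re, Complex.conj_im]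
    ring
  -- the product function g and its derivative
  set g : ℝ → ℝ := fun s => ρ s * ‖f s‖^2 with hgdef
  have hgderiv : ∀ s ∈ Set.Ioo 0 L, HasDerivAt g (K s) s := fun s hs =>
    (hρderiv s).mul (hnsq s hs)
  have hρcont : Continuous ρ := by
    apply Continuous.neg
    exact (Real.continuous_sinh.comp (continuous_sub_right _)).div
      (Real.continuous_cosh.comp (continuous_sub_right _)) (fun s => ne_of_gt (hchpos s))
  have hgcont : ContinuousOn g (Set.Icc 0 L) :=
    hρcont.continuousOn.mul (hcont.norm.pow 2)
  -- integrability
  have hfsq : IntegrableOn (fun s => ‖f s‖^2) (Set.Ioo 0 L) volume := by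
    have := hf2.integrable_norm_rpow two_ne_zero ENNReal.ofNat_ne_top
    simpa [IntegrableOn, ENNReal.toReal_ofNat, Real.rpow_natCast] using this
  have hf'sq : IntegrableOn (fun s => ‖f' s‖^2) (Set.Ioo 0 L) volume := by
    have := hf'2.integrable_norm_rpow two_ne_zero ENNReal.ofNat_ne_top
    simpa [IntegrableOn, ENNReal.toReal_ofNat, Real.rpow_natCast] using this
  have hsum_int : IntegrableOn (fun s => ‖f' s‖^2 + ‖f s‖^2) (Set.Ioo 0 L) volume :=
    hf'sq.add hfsq
  -- bound on the real part
  have hrb : ∀ s : ℝ, |((starRingEnd ℂ) (f s) * f' s).re| ≤ ‖f s‖ * ‖f' s‖ := by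
    intro s
    calc |((starRingEnd ℂ) (f s) * f' s).re| ≤ ‖(starRingEnd ℂ) (f s) * f' s‖ :=
          Complex.abs_re_le_norm _
      _ = ‖f s‖ * ‖f' s‖ := by
          rw [norm_mul, Complex.norm_conj]
  -- K rewritten as quotient, and bounds
  have hKeq : ∀ s : ℝ, -K s = (‖f s‖^2 + Real.sinh (s - L/2) * Real.cosh (s - L/2)
      * (2 * ((starRingEnd ℂ) (f s) * f' s).re)) / Real.cosh (s - L/2)^2 := by
    intro s
    have hch := hchpos s
    rw [hKdef, hρdef, hρ'def]
    field_simp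
    ring
  have hineq : ∀ s : ℝ, -K s ≤ ‖f' s‖^2 + ‖f s‖^2 := by
    intro s
    rw [hKeq s]
    have hr := abs_le.mp (hrb s)
    exact aux_quad _ _ _ _ _ (hchpos s) (Real.cosh_sq _) hr.2 hr.1
  have hineq2 : ∀ s : ℝ, K s ≤ ‖f' s‖^2 + ‖f s‖^2 := by
    intro s
    have h1 : K s = (-(‖f s‖^2) + Real.sinh (s - L/2) * Real.cosh (s - L/2)
        * (2 * (-((starRingEnd ℂ) (f s) * f' s).re))) / Real.cosh (s - L/2)^2 := by
      have := hKeq s; have hch := hchpos s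
      rw [hKdef, hρdef, hρ'def]; field_simp
    rw [h1]
    have hr := abs_le.mp (hrb s)
    calc _ ≤ (‖f s‖^2 + Real.sinh (s - L/2) * Real.cosh (s - L/2)
        * (2 * (-((starRingEnd ℂ) (f s) * f' s).re))) / Real.cosh (s - L/2)^2 := by
          gcongr
          exact neg_le_self (sq_nonneg _)
      _ ≤ ‖f' s‖^2 + ‖f s‖^2 :=
          aux_quad _ _ _ _ _ (hchpos s) (Real.cosh_sq _) (by linarith) (by linarith)
  -- measurability and integrability of K
  have hρ'cont : Continuous ρ' := by
    apply Continuous.neg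
    exact continuous_const.div ((Real.continuous_cosh.comp (continuous_sub_right _)).pow 2)
      (fun s => by positivity)
  have hKmeas : AEStronglyMeasurable K (volume.restrict (Set.Ioo 0 L)) := by
    have hconj : AEStronglyMeasurable (fun s => (starRingEnd ℂ) (f s))
        (volume.restrict (Set.Ioo 0 L)) := by
      exact continuous_star.comp_aestronglyMeasurable hf2.1
    have hre : AEStronglyMeasurable (fun s => ((starRingEnd ℂ) (f s) * f' s).re)
        (volume.restrict (Set.Ioo 0 L)) :=
      Complex.continuous_re.comp_aestronglyMeasurable (hconj.mul hf'2.1)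
    exact ((hρ'cont.aestronglyMeasurable).mul (hf2.1.norm.pow 2)).add
      ((hρcont.aestronglyMeasurable).mul (hre.const_mul 2))
  have hKint : IntegrableOn K (Set.Ioo 0 L) volume := by
    apply Integrable.mono' hsum_int hKmeas
    filter_upwards with s
    rw [Real.norm_eq_abs, abs_le]
    exact ⟨by linarith [hineq s], hineq2 s⟩
  have hKii : IntervalIntegrable K volume 0 L := by
    rw [intervalIntegrable_iff_integrableOn_Ioo_of_le hL.le]
    exact hKint
  have hFTC : ∫ y in (0:ℝ)..L, K y = g L - g 0 :=
    intervalIntegral.integral_eq_sub_of_hasDerivAt_of_le hL.le hgcont hgderiv hKii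
  have hIoo : ∫ y in (0:ℝ)..L, K y = ∫ s in Set.Ioo 0 L, K s := by
    rw [intervalIntegral.integral_of_le hL.le, integral_Ioc_eq_integral_Ioo]
  have hgval : g L - g 0 = -(Real.sinh (L/2)/Real.cosh (L/2) * (‖f 0‖^2 + ‖f L‖^2)) := by
    rw [hgdef, hρdef]
    simp only
    have h1 : L - L/2 = L/2 := by ring
    have h2 : (0:ℝ) - L/2 = -(L/2) := by ring
    rw [h1, h2, Real.sinh_neg, Real.cosh_neg]
    ring
  have hfinal : ∫ s in Set.Ioo 0 L, (-K s) ≤ ∫ s in Set.Ioo 0 L, (‖f' s‖^2 + ‖f s‖^2) :=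
    integral_mono hKint.neg hsum_int hineq
  have hval : ∫ s in Set.Ioo 0 L, (-K s)
      = Real.sinh (L/2)/Real.cosh (L/2) * (‖f 0‖^2 + ‖f L‖^2) := by
    rw [integral_neg, ← hIoo, hFTC, hgval]; ring
  linarith [hfinal, hval]


lemma tanh_mono' {a b : ℝ} (hab : a ≤ b) :
    Real.sinh a / Real.cosh a ≤ Real.sinh b / Real.cosh b := by
  rw [div_le_div_iff₀ (Real.cosh_pos a) (Real.cosh_pos b)]
  have h : 0 ≤ Real.sinh (b - a) := by
    rw [← Real.sinh_zero]
    exact (Real.sinh_le_sinh).mpr (by linarith)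
  rw [Real.sinh_sub] at h
  linarith

lemma lintegral_nnnorm_sq_eq {α : Type*} [MeasurableSpace α] {μ : Measure α}
    (g : α → ℂ) (hg : MemLp g 2 μ) :
    ∫⁻ x, (‖g x‖₊ : ENNReal) ^ 2 ∂μ = ENNReal.ofReal (∫ x, ‖g x‖^2 ∂μ) := by
  have hint : Integrable (fun x => ‖g x‖^2) μ := by
    have := hg.integrable_norm_rpow two_ne_zero ENNReal.ofNat_ne_top
    simpa [ENNReal.toReal_ofNat, Real.rpow_natCast] using this
  rw [ofReal_integral_eq_lintegral_ofReal hint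
    (Filter.Eventually.of_forall fun x => sq_nonneg _)]
  exact lintegral_congr fun x => by
    rw [← enorm_eq_nnnorm, ← ofReal_norm, ← ENNReal.ofReal_pow (norm_nonneg _)]

/-- Summed two-endpoint trace estimate on a family of edges with lengths bounded below by
`ℓ₀ > 0`: `Σ_e (|f_e(0)|² + |f_e(ℓ_e)|²) ≤ coth(ℓ₀/2) Σ_e (‖f_e'‖²_{L²} + ‖f_e‖²_{L²})`,
with both sums taken in `[0, ∞]`. -/
theorem summed_trace_estimate_edges
    {E : Type*} [Countable E]
    {ℓ₀ : ℝ} (hℓ₀ : 0 < ℓ₀) (ℓ : E → ℝ) (hℓ : ∀ e, ℓ₀ ≤ ℓ e)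
    (f f' : E → ℝ → ℂ)
    (hcont : ∀ e, ContinuousOn (f e) (Set.Icc 0 (ℓ e)))
    (hderiv : ∀ e, ∀ s ∈ Set.Ioo 0 (ℓ e), HasDerivAt (f e) (f' e s) s)
    (hf2 : ∀ e, MemLp (f e) 2 (volume.restrict (Set.Ioo 0 (ℓ e))))
    (hf'2 : ∀ e, MemLp (f' e) 2 (volume.restrict (Set.Ioo 0 (ℓ e)))) :
    (∑' e : E, ((‖f e 0‖₊ : ENNReal) ^ 2 + (‖f e (ℓ e)‖₊ : ENNReal) ^ 2))
      ≤ ENNReal.ofReal (Real.cosh (ℓ₀ / 2) / Real.sinh (ℓ₀ / 2)) *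
        ∑' e : E, ((∫⁻ s in Set.Ioo 0 (ℓ e), (‖f' e s‖₊ : ENNReal) ^ 2)
          + ∫⁻ s in Set.Ioo 0 (ℓ e), (‖f e s‖₊ : ENNReal) ^ 2) := by
  have hsh₀ : 0 < Real.sinh (ℓ₀/2) := Real.sinh_pos_iff.mpr (by linarith)
  have hch₀ : 0 < Real.cosh (ℓ₀/2) := Real.cosh_pos _
  rw [← ENNReal.tsum_mul_left]
  apply ENNReal.tsum_le_tsum
  intro e
  have hLpos : 0 < ℓ e := lt_of_lt_of_le hℓ₀ (hℓ e)
  -- real quantities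
  set A : ℝ := ‖f e 0‖^2 + ‖f e (ℓ e)‖^2 with hA
  have hfsq : IntegrableOn (fun s => ‖f e s‖^2) (Set.Ioo 0 (ℓ e)) volume := by
    have := (hf2 e).integrable_norm_rpow two_ne_zero ENNReal.ofNat_ne_top
    simpa [IntegrableOn, ENNReal.toReal_ofNat, Real.rpow_natCast] using this
  have hf'sq : IntegrableOn (fun s => ‖f' e s‖^2) (Set.Ioo 0 (ℓ e)) volume := by
    have := (hf'2 e).integrable_norm_rpow two_ne_zero ENNReal.ofNat_ne_top
    simpa [IntegrableOn, ENNReal.toReal_ofNat, Real.rpow_natCast] using this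
  set I : ℝ := (∫ s in Set.Ioo 0 (ℓ e), ‖f' e s‖^2)
      + ∫ s in Set.Ioo 0 (ℓ e), ‖f e s‖^2 with hI
  have hIsplit : ∫ s in Set.Ioo 0 (ℓ e), (‖f' e s‖^2 + ‖f e s‖^2) = I :=
    integral_add hf'sq hfsq
  -- the single-edge estimate
  have hedge := single_edge_trace hLpos (f e) (f' e) (hcont e) (hderiv e) (hf2 e) (hf'2 e)
  rw [hIsplit] at hedge
  have hmono : Real.sinh (ℓ₀/2) / Real.cosh (ℓ₀/2)
      ≤ Real.sinh (ℓ e / 2) / Real.cosh (ℓ e / 2) := tanh_mono' (by linarith [hℓ e])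
  have hApos : 0 ≤ A := by positivity
  have hreal : A ≤ Real.cosh (ℓ₀/2) / Real.sinh (ℓ₀/2) * I := by
    have h1 : Real.sinh (ℓ₀/2) / Real.cosh (ℓ₀/2) * A ≤ I :=
      le_trans (by nlinarith) hedge
    rw [div_mul_eq_mul_div, le_div_iff₀ hsh₀]
    calc A * Real.sinh (ℓ₀/2) = Real.cosh (ℓ₀/2) * (Real.sinh (ℓ₀/2) / Real.cosh (ℓ₀/2) * A)
          := by field_simp
      _ ≤ Real.cosh (ℓ₀/2) * I := by
          exact mul_le_mul_of_nonneg_left h1 hch₀.le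
  -- convert to ENNReal
  have hl1 : (∫⁻ s in Set.Ioo 0 (ℓ e), (‖f' e s‖₊ : ENNReal) ^ 2)
      = ENNReal.ofReal (∫ s in Set.Ioo 0 (ℓ e), ‖f' e s‖^2) :=
    lintegral_nnnorm_sq_eq (f' e) (hf'2 e)
  have hl2 : (∫⁻ s in Set.Ioo 0 (ℓ e), (‖f e s‖₊ : ENNReal) ^ 2)
      = ENNReal.ofReal (∫ s in Set.Ioo 0 (ℓ e), ‖f e s‖^2) :=
    lintegral_nnnorm_sq_eq (f e) (hf2 e)
  have hLHS : (‖f e 0‖₊ : ENNReal) ^ 2 + (‖f e (ℓ e)‖₊ : ENNReal) ^ 2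
      = ENNReal.ofReal A := by
    rw [hA, ENNReal.ofReal_add (sq_nonneg _) (sq_nonneg _)]
    congr 1 <;> rw [← enorm_eq_nnnorm, ← ofReal_norm, ← ENNReal.ofReal_pow (norm_nonneg _)]
  rw [hLHS, hl1, hl2]
  rw [← ENNReal.ofReal_add (integral_nonneg fun s => sq_nonneg _)
    (integral_nonneg fun s => sq_nonneg _), ← hI]
  rw [← ENNReal.ofReal_mul (by positivity)]
  exact ENNReal.ofReal_le_ofReal hreal
end
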